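/- Let A ∈ ℚ^{n×n} be invertible, set B = A^{−1}, and assume b := [ℤ^n[B] : Bℤ^n[B]] is finite with b ≥ n. Then there exists a complete set of coset representatives ℰ ⊂ ℤ^n of the quotient group ℤ^n[B]/Bℤ^n[B] (i.e. ℰ contains exactly one element of each coset of Bℤ^n[B] in ℤ^n[B]) that contains n vectors c₁, …, c_n which are linearly independent over ℝ. -/

import Mathlib

open Matrix

/-- `ℤ^n[M] = ⋃_{k≥1} (ℤ^n + Mℤ^n + ⋯ + M^{k-1}ℤ^n)`, the additive subgroup of `ℚ^n`
generated by all vectors `M^j z` with `z ∈ ℤ^n`. -/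
def intSpan (n : ℕ) (M : Matrix (Fin n) (Fin n) ℚ) : AddSubgroup (Fin n → ℚ) :=
  AddSubgroup.closure {x | ∃ (j : ℕ) (z : Fin n → ℤ), x = (M ^ j) *ᵥ fun i => (z i : ℚ)}

/-- The index `[ℤ^n[M] : Mℤ^n[M]]` of the additive subgroup `Mℤ^n[M]` in `ℤ^n[M]`. -/
noncomputable def idx (n : ℕ) (M : Matrix (Fin n) (Fin n) ℚ) : ℕ :=
  ((intSpan n M).map (Matrix.mulVecLin M).toAddMonoidHom).relIndex (intSpan n M)

/-- `ℤ^n` as an additive subgroup of `ℚ^n`. -/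
def intVecs (n : ℕ) : AddSubgroup (Fin n → ℚ) where
  carrier := {x | ∀ i, ∃ m : ℤ, x i = (m : ℚ)}
  zero_mem' := fun i => ⟨0, by simp⟩
  add_mem' := by
    intro a b ha hb i
    obtain ⟨ma, hma⟩ := ha i
    obtain ⟨mb, hmb⟩ := hb i
    exact ⟨ma + mb, by simp [hma, hmb]⟩
  neg_mem' := by
    intro a ha i
    obtain ⟨ma, hma⟩ := ha i
    exact ⟨-ma, by simp [hma]⟩

namespace Stmt15Aux

variable {n : ℕ} {B : Matrix (Fin n) (Fin n) ℚ}

lemma intVecs_le : intVecs n ≤ intSpan n B := by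
  intro x hx
  apply AddSubgroup.subset_closure
  refine ⟨0, fun i => Classical.choose (hx i), ?_⟩
  rw [pow_zero, Matrix.one_mulVec]
  funext i
  exact Classical.choose_spec (hx i)

lemma map_le : (intSpan n B).map (Matrix.mulVecLin B).toAddMonoidHom ≤ intSpan n B := by
  rw [intSpan, AddMonoidHom.map_closure, AddSubgroup.closure_le]
  rintro x ⟨y, ⟨j, z, rfl⟩, rfl⟩
  apply AddSubgroup.subset_closure
  refine ⟨j + 1, z, ?_⟩
  simp [Matrix.mulVec_mulVec, pow_succ']

lemma reduce : ∀ y ∈ intSpan n B, ∃ z, z ∈ intVecs n ∧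
    y - z ∈ (intSpan n B).map (Matrix.mulVecLin B).toAddMonoidHom := by
  intro y hy
  induction hy using AddSubgroup.closure_induction with
  | mem x hx =>
    obtain ⟨j, z, rfl⟩ := hx
    cases j with
    | zero =>
      refine ⟨(B ^ 0) *ᵥ fun i => ((z i : ℤ) : ℚ), fun i => ⟨z i, ?_⟩, ?_⟩
      · simp [Matrix.one_mulVec]
      · rw [sub_self]; exact zero_mem _
    | succ j =>
      refine ⟨0, (intVecs n).zero_mem, ?_⟩
      rw [sub_zero]
      refine ⟨(B ^ j) *ᵥ fun i => (z i : ℚ), AddSubgroup.subset_closure ⟨j, z, rfl⟩, ?_⟩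
      simp [Matrix.mulVec_mulVec, pow_succ']
  | zero => exact ⟨0, (intVecs n).zero_mem, by rw [sub_zero]; exact zero_mem _⟩
  | add a b _ _ ha hb =>
    obtain ⟨za, hza, ha'⟩ := ha
    obtain ⟨zb, hzb, hb'⟩ := hb
    refine ⟨za + zb, (intVecs n).add_mem hza hzb, ?_⟩
    have : a + b - (za + zb) = (a - za) + (b - zb) := by ring_nf
    rw [this]
    exact add_mem ha' hb'
  | neg a _ ha =>
    obtain ⟨za, hza, ha'⟩ := ha
    refine ⟨-za, (intVecs n).neg_mem hza, ?_⟩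
    have : -a - -za = -(a - za) := by ring_nf
    rw [this]
    exact neg_mem ha'

end Stmt15Aux

theorem stmt15 (n : ℕ) (A : Matrix (Fin n) (Fin n) ℚ) (hA : IsUnit A.det)
    -- `b = [ℤ^n[B] : Bℤ^n[B]]` is finite (nonzero index) with `b ≥ n`, where `B = A⁻¹`
    (hfin : idx n A⁻¹ ≠ 0) (hbn : n ≤ idx n A⁻¹) :
    ∃ E : Set (Fin n → ℚ),
      -- `E ⊆ ℤ^n`
      E ⊆ (intVecs n : Set (Fin n → ℚ)) ∧
      -- `E` is a complete set of coset representatives of `ℤ^n[B]/Bℤ^n[B]`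
      (∀ y ∈ intSpan n A⁻¹, ∃! e, e ∈ E ∧
        y - e ∈ (intSpan n A⁻¹).map (Matrix.mulVecLin A⁻¹).toAddMonoidHom) ∧
      -- `E` contains `n` vectors that are linearly independent over `ℝ`
      (∃ c : Fin n → Fin n → ℚ, (∀ i, c i ∈ E) ∧
        LinearIndependent ℝ fun i => fun j => ((c i j : ℝ))) := by
  classical
  set B := A⁻¹ with hB
  set G := intSpan n B with hGdef
  set H := G.map (Matrix.mulVecLin B).toAddMonoidHom with hHdef
  have hHG : H ≤ G := Stmt15Aux.map_le
  set H' : AddSubgroup G := H.addSubgroupOf G with hH'def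
  set b := idx n B with hbdef
  have hbcard : b = Nat.card (G ⧸ H') := by
    rw [hbdef, idx, AddSubgroup.relIndex, AddSubgroup.index_eq_card]
  have hfinQ : Finite (G ⧸ H') := Nat.finite_of_card_ne_zero (hbcard ▸ hfin)
  -- b • z ∈ H for any z ∈ G
  have hsmul : ∀ z : Fin n → ℚ, (hz : z ∈ G) → b • z ∈ H := by
    intro z hz
    have h1 : ((b • (⟨z, hz⟩ : G) : G) : G ⧸ H') = 0 := by
      have : ((b • (⟨z, hz⟩ : G) : G) : G ⧸ H')
          = b • ((⟨z, hz⟩ : G) : G ⧸ H') := by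
        exact (QuotientAddGroup.mk' H').map_nsmul b ⟨z, hz⟩
      rw [this, hbcard]
      exact card_nsmul_eq_zero'
    rw [QuotientAddGroup.eq_zero_iff] at h1
    rw [AddSubgroup.mem_addSubgroupOf] at h1
    simpa using h1
  -- section of the quotient by integer vectors
  have hsec : ∀ q : G ⧸ H', ∃ z, ∃ hz1 : z ∈ intVecs n, ∃ hz : z ∈ G,
      ((⟨z, hz⟩ : G) : G ⧸ H') = q := by
    intro q
    obtain ⟨⟨y, hy⟩, rfl⟩ := QuotientAddGroup.mk_surjective q
    obtain ⟨z, hzint, hzH⟩ := Stmt15Aux.reduce y hy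
    have hzG : z ∈ G := Stmt15Aux.intVecs_le hzint
    refine ⟨z, hzint, hzG, ?_⟩
    rw [QuotientAddGroup.eq]
    rw [AddSubgroup.mem_addSubgroupOf]
    show -z + y ∈ H
    rwa [neg_add_eq_sub]
  choose s hsint hsG hsmk using hsec
  -- embedding of Fin n into the quotient
  haveI : Fintype (G ⧸ H') := Fintype.ofFinite _
  have hcard : Fintype.card (Fin n) ≤ Fintype.card (G ⧸ H') := by
    rw [Fintype.card_fin, ← Nat.card_eq_fintype_card, ← hbcard]
    exact hbn
  obtain ⟨ι⟩ := Function.Embedding.nonempty_of_card_le hcard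
  -- the matrix of section values
  set S : Matrix (Fin n) (Fin n) ℚ := Matrix.of fun i j => s (ι i) j with hSdef
  -- find t = b * M with det (S + t • 1) ≠ 0
  have hp0 : (-S).charpoly ≠ 0 := ((-S).charpoly_monic).ne_zero
  have hroots : {x : ℚ | Polynomial.IsRoot (-S).charpoly x}.Finite :=
    Polynomial.finite_setOf_isRoot hp0
  have hginj : Function.Injective (fun M : ℕ => ((b : ℚ) * M)) := by
    intro a c h
    simp only [mul_eq_mul_left_iff, Nat.cast_inj, Nat.cast_eq_zero] at h
    rcases h with h | h
    · exact h
    · exact absurd h hfin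
  have hinf : (Set.range (fun M : ℕ => ((b : ℚ) * M)) \
      {x : ℚ | Polynomial.IsRoot (-S).charpoly x}).Infinite :=
    (Set.infinite_range_of_injective hginj).diff hroots
  obtain ⟨t, ht⟩ := hinf.nonempty
  obtain ⟨⟨M, rfl⟩, htroot⟩ := ht
  set t : ℚ := (b : ℚ) * M with htdef
  -- evaluate the characteristic polynomial
  have hdet : (S + t • (1 : Matrix (Fin n) (Fin n) ℚ)).det ≠ 0 := by
    have heval : Polynomial.eval t ((-S).charpoly)
        = (S + t • (1 : Matrix (Fin n) (Fin n) ℚ)).det := by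
      have h1 := (Polynomial.evalRingHom t).map_det (Matrix.charmatrix (-S))
      simp only [Polynomial.coe_evalRingHom] at h1
      rw [Matrix.charpoly, h1]
      congr 1
      ext i j
      by_cases hij : i = j
      · subst hij
        simp [Matrix.charmatrix_apply_eq, Matrix.one_apply]
        ring
      · simp [Matrix.charmatrix_apply_ne _ _ _ hij, Matrix.one_apply_ne hij]
    rw [← heval]
    exact htroot
  set c : Fin n → Fin n → ℚ := fun i => (S + t • (1 : Matrix (Fin n) (Fin n) ℚ)) i with hcdef
  -- c i is an integer vector
  have hcint : ∀ i, c i ∈ intVecs n := by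
    intro i j
    obtain ⟨m, hm⟩ := hsint (ι i) j
    refine ⟨m + if i = j then (b : ℤ) * M else 0, ?_⟩
    have hS : S i j = (m : ℚ) := hm
    have hc : c i j = S i j + t * (if i = j then 1 else 0) := by
      simp [hcdef, Matrix.add_apply, Matrix.smul_apply, Matrix.one_apply]
    rw [hc, hS, htdef]
    split_ifs <;> push_cast <;> ring
  have hcG : ∀ i, c i ∈ G := fun i => Stmt15Aux.intVecs_le (hcint i)
  -- c i is congruent to s (ι i) mod H
  have hcmk : ∀ i, ((⟨c i, hcG i⟩ : G) : G ⧸ H') = ι i := by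
    intro i
    have key : ((⟨s (ι i), hsG (ι i)⟩ : G) : G ⧸ H') = ((⟨c i, hcG i⟩ : G) : G ⧸ H') := by
      rw [QuotientAddGroup.eq]
      rw [AddSubgroup.mem_addSubgroupOf]
      show -(s (ι i)) + c i ∈ H
      set d : Fin n → ℚ := fun j => (M : ℚ) * (if i = j then 1 else 0) with hddef
      have hdint : d ∈ intVecs n := by
        intro j
        refine ⟨if i = j then (M : ℤ) else 0, ?_⟩
        by_cases h : i = j <;> simp [hddef, h]
      have hdG : d ∈ G := Stmt15Aux.intVecs_le hdint
      have heq : -(s (ι i)) + c i = b • d := by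
        funext j
        simp only [hcdef, hddef, Pi.add_apply, Pi.neg_apply, Matrix.add_apply,
          Matrix.smul_apply, Matrix.one_apply, smul_eq_mul, Pi.smul_apply, nsmul_eq_mul]
        have hS : (S : Matrix (Fin n) (Fin n) ℚ) i j = s (ι i) j := rfl
        rw [hS, htdef]
        split_ifs <;> ring
      rw [heq]
      exact hsmul d hdG
    rw [← key, hsmk]
  -- the representative function
  set rep : (G ⧸ H') → (Fin n → ℚ) :=
    fun q => if h : ∃ i, ι i = q then c h.choose else s q with hrepdef
  have hrep_pos : ∀ q (h : ∃ i, ι i = q), rep q = c h.choose := by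
    intro q h
    simp only [hrepdef]
    rw [dif_pos h]
  have hrep_neg : ∀ q (h : ¬ ∃ i, ι i = q), rep q = s q := by
    intro q h
    simp only [hrepdef]
    rw [dif_neg h]
  have hrepint : ∀ q, rep q ∈ intVecs n := by
    intro q
    by_cases h : ∃ i, ι i = q
    · rw [hrep_pos q h]; exact hcint _
    · rw [hrep_neg q h]; exact hsint q
  have hrepG : ∀ q, rep q ∈ G := fun q => Stmt15Aux.intVecs_le (hrepint q)
  have hrepmk : ∀ q, ((⟨rep q, hrepG q⟩ : G) : G ⧸ H') = q := by
    intro q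
    by_cases h : ∃ i, ι i = q
    · have hr : rep q = c h.choose := hrep_pos q h
      have : ((⟨rep q, hrepG q⟩ : G) : G ⧸ H')
          = ((⟨c h.choose, hcG h.choose⟩ : G) : G ⧸ H') := by
        congr 1
        exact Subtype.ext hr
      rw [this, hcmk, h.choose_spec]
    · have hr : rep q = s q := hrep_neg q h
      have : ((⟨rep q, hrepG q⟩ : G) : G ⧸ H')
          = ((⟨s q, hsG q⟩ : G) : G ⧸ H') := by
        congr 1
        exact Subtype.ext hr
      rw [this, hsmk]
  have hrepc : ∀ i, rep (ι i) = c i := by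
    intro i
    have h : ∃ i', ι i' = ι i := ⟨i, rfl⟩
    rw [hrep_pos _ h]
    exact congrArg c (ι.injective h.choose_spec)
  refine ⟨Set.range rep, ?_, ?_, ?_⟩
  · rintro x ⟨q, rfl⟩
    exact hrepint q
  · intro y hy
    refine ⟨rep ((⟨y, hy⟩ : G) : G ⧸ H'), ⟨⟨_, rfl⟩, ?_⟩, ?_⟩
    · set q := ((⟨y, hy⟩ : G) : G ⧸ H') with hq
      have := hrepmk q
      rw [hq] at this
      rw [QuotientAddGroup.eq] at this
      rw [AddSubgroup.mem_addSubgroupOf] at this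
      have h2 : -(rep q) + y ∈ H := this
      rwa [neg_add_eq_sub] at h2
    · rintro e ⟨⟨q', rfl⟩, he⟩
      have h1 : ((⟨rep q', hrepG q'⟩ : G) : G ⧸ H') = ((⟨y, hy⟩ : G) : G ⧸ H') := by
        rw [QuotientAddGroup.eq]
        rw [AddSubgroup.mem_addSubgroupOf]
        show -(rep q') + y ∈ H
        rwa [neg_add_eq_sub]
      rw [hrepmk q'] at h1
      rw [h1]
  · refine ⟨c, fun i => ⟨ι i, hrepc i⟩, ?_⟩
    have hdetR : ((S + t • (1 : Matrix (Fin n) (Fin n) ℚ)).map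
        (Rat.cast : ℚ → ℝ)).det ≠ 0 := by
      have h1 := (Rat.castHom ℝ).map_det (S + t • (1 : Matrix (Fin n) (Fin n) ℚ))
      rw [RingHom.mapMatrix_apply] at h1
      simp only [Rat.coe_castHom] at h1
      rw [← h1]
      exact_mod_cast hdet
    have hunit : IsUnit ((S + t • (1 : Matrix (Fin n) (Fin n) ℚ)).map
        (Rat.cast : ℚ → ℝ)) := by
      rw [Matrix.isUnit_iff_isUnit_det]
      exact isUnit_iff_ne_zero.mpr hdetR
    have hli := Matrix.linearIndependent_rows_iff_isUnit.mpr hunit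
    exact hli
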